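/- arXiv:gr-qc/9906037 — 6 statements merged into one kernel-verified Lean document; each statement's English description precedes it below -/
import Mathlib

section
/- Let G be a Hausdorff topological group acting continuously on a locally compact Hausdorff topological space X. Then the action is proper if and only if for every compact subset K of X, the set {g ∈ G : (g • K) ∩ K ≠ ∅} is a compact subset of G. -/
open Pointwise

/-- Let `G` be a Hausdorff topological group acting continuously on a
locally compact Hausdorff topological space `X`. Then the action is proper (i.e. the map
`G × X → X × X`, `(g, x) ↦ (g • x, x)`, is a proper map) if and only if for every compact
subset `K` of `X`, the set `{g ∈ G : (g • K) ∩ K ≠ ∅}` is a compact subset of `G`. -/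
theorem proper_action_iff_compact_transporter
    {G X : Type*} [Group G] [TopologicalSpace G] [IsTopologicalGroup G] [T2Space G]
    [TopologicalSpace X] [LocallyCompactSpace X] [T2Space X]
    [MulAction G X] [ContinuousSMul G X] :
    IsProperMap (fun p : G × X => (p.1 • p.2, p.2)) ↔
      ∀ K : Set X, IsCompact K → IsCompact {g : G | (g • K) ∩ K ≠ ∅} := by
  have hcont : Continuous (fun p : G × X => (p.1 • p.2, p.2)) :=
    (continuous_fst.smul continuous_snd).prodMk continuous_snd
  constructor
  · intro hp K hK
    have hpre : IsCompact ((fun p : G × X => (p.1 • p.2, p.2)) ⁻¹' (K ×ˢ K)) :=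
      hp.isCompact_preimage (hK.prod hK)
    have himg : IsCompact (Prod.fst '' ((fun p : G × X => (p.1 • p.2, p.2)) ⁻¹' (K ×ˢ K))) :=
      hpre.image continuous_fst
    convert himg using 1
    ext g
    simp only [Set.mem_setOf_eq, Set.mem_image, Set.mem_preimage, Set.mem_prod, Prod.exists,
      exists_and_right, exists_eq_right]
    constructor
    · intro h
      obtain ⟨y, hy⟩ := Set.nonempty_iff_ne_empty.2 h
      obtain ⟨⟨x, hx, rfl⟩, hy2⟩ := hy
      exact ⟨x, ⟨hy2, hx⟩⟩
    · rintro ⟨x, hgx, hx⟩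
      exact Set.nonempty_iff_ne_empty.1 ⟨g • x, ⟨x, hx, rfl⟩, hgx⟩
  · intro h
    rw [isProperMap_iff_isCompact_preimage]
    refine ⟨hcont, fun L hL => ?_⟩
    set K := Prod.fst '' L ∪ Prod.snd '' L with hKdef
    have hK : IsCompact K := (hL.image continuous_fst).union (hL.image continuous_snd)
    have hsub : (fun p : G × X => (p.1 • p.2, p.2)) ⁻¹' L ⊆
        {g : G | (g • K) ∩ K ≠ ∅} ×ˢ K := by
      rintro ⟨g, x⟩ hgx
      simp only [Set.mem_preimage] at hgx
      have hxK : x ∈ K := Or.inr ⟨_, hgx, rfl⟩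
      have hgxK : g • x ∈ K := Or.inl ⟨_, hgx, rfl⟩
      exact ⟨Set.nonempty_iff_ne_empty.1 ⟨g • x, ⟨x, hxK, rfl⟩, hgxK⟩, hxK⟩
    have hclosed : IsClosed ((fun p : G × X => (p.1 • p.2, p.2)) ⁻¹' L) :=
      hL.isClosed.preimage hcont
    exact ((h K hK).prod hK).of_isClosed_subset hclosed hsub
end

section
/- Let G be a metrizable topological group acting continuously on a locally compact metric space X. Then the action fails to be proper if and only if there exist a sequence (xₙ) in X converging to some x ∈ X and a sequence (gₙ) in G having no convergent subsequence, such that the sequence (gₙ • xₙ) converges in X. -/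
open Filter Topology

/-- Let `G` be a metrizable topological group acting continuously on a
locally compact metric space `X`. Then the action fails to be proper (where proper means
that `(g, x) ↦ (g • x, x)` is a proper map) if and only if there exist a sequence `xₙ`
in `X` converging to some `x ∈ X` and a sequence `gₙ` in `G` having no convergent
subsequence, such that the sequence `gₙ • xₙ` converges in `X`. -/
theorem not_proper_action_iff_exists_seq
    {G X : Type*} [Group G] [TopologicalSpace G] [IsTopologicalGroup G]
    [TopologicalSpace.MetrizableSpace G]
    [MetricSpace X] [LocallyCompactSpace X]
    [MulAction G X] [ContinuousSMul G X] :
    ¬ IsProperMap (fun p : G × X => (p.1 • p.2, p.2)) ↔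
      ∃ (x : ℕ → X) (x₀ : X) (g : ℕ → G),
        Tendsto x atTop (𝓝 x₀) ∧
        (¬ ∃ (φ : ℕ → ℕ) (g₀ : G), StrictMono φ ∧ Tendsto (g ∘ φ) atTop (𝓝 g₀)) ∧
        ∃ y : X, Tendsto (fun n => g n • x n) atTop (𝓝 y) := by
  letI : MetricSpace (G × X) := TopologicalSpace.metrizableSpaceMetric (G × X)
  constructor
  · intro hnp
    rw [isProperMap_iff_isCompact_preimage] at hnp
    push_neg at hnp
    have hcont : Continuous (fun p : G × X => (p.1 • p.2, p.2)) :=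
      (continuous_smul.comp continuous_id).prodMk continuous_snd
    obtain ⟨K, hK, hKnc⟩ := hnp hcont
    -- the preimage is not sequentially compact
    have hns : ¬ IsSeqCompact ((fun p : G × X => (p.1 • p.2, p.2)) ⁻¹' K) := by
      intro h
      exact hKnc h.isCompact
    rw [IsSeqCompact] at hns
    push_neg at hns
    obtain ⟨u, hu, hnosub⟩ := hns
    -- extract a converging subsequence of the images in K
    obtain ⟨⟨y, x₀⟩, _, φ, hφ, hconv⟩ :=
      hK.tendsto_subseq (x := fun n => ((u n).1 • (u n).2, (u n).2)) (fun n => hu n)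
    refine ⟨fun n => (u (φ n)).2, x₀, fun n => (u (φ n)).1, ?_, ?_, y, ?_⟩
    · exact (continuous_snd.tendsto _).comp hconv
    · rintro ⟨ψ, g₀, hψ, hg⟩
      -- then u ∘ φ ∘ ψ converges, contradiction
      have hx : Tendsto (fun n => (u (φ (ψ n))).2) atTop (𝓝 x₀) :=
        ((continuous_snd.tendsto _).comp hconv).comp hψ.tendsto_atTop
      have hlim : Tendsto (fun n => u (φ (ψ n))) atTop (𝓝 (g₀, x₀)) :=
        Tendsto.prodMk_nhds hg hx
      have hcl : IsClosed ((fun p : G × X => (p.1 • p.2, p.2)) ⁻¹' K) :=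
        hK.isClosed.preimage hcont
      have hmem : (g₀, x₀) ∈ (fun p : G × X => (p.1 • p.2, p.2)) ⁻¹' K :=
        hcl.mem_of_tendsto hlim (Eventually.of_forall fun n => hu _)
      exact hnosub (g₀, x₀) hmem (φ ∘ ψ) (hφ.comp hψ) hlim
    · exact (continuous_fst.tendsto _).comp hconv
  · rintro ⟨x, x₀, g, hx, hg, y, hy⟩ hp
    have hK : IsCompact ((insert y (Set.range fun n => g n • x n)) ×ˢ
        (insert x₀ (Set.range x))) :=
      hy.isCompact_insert_range.prod hx.isCompact_insert_range
    have hpre := hp.isCompact_preimage hK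
    have hmem : ∀ n, (g n, x n) ∈
        (fun p : G × X => (p.1 • p.2, p.2)) ⁻¹' ((insert y (Set.range fun n => g n • x n)) ×ˢ
          (insert x₀ (Set.range x))) := by
      intro n
      exact ⟨Set.mem_insert_of_mem _ ⟨n, rfl⟩, Set.mem_insert_of_mem _ ⟨n, rfl⟩⟩
    obtain ⟨⟨g₀, p₀⟩, _, φ, hφ, hconv⟩ := hpre.tendsto_subseq hmem
    exact hg ⟨φ, g₀, hφ, (continuous_fst.tendsto _).comp hconv⟩
end

section
/- Let G be a locally compact Hausdorff topological group acting properly and continuously on a locally compact, σ-compact, metrizable topological space X. Then there exists a distance function d on X inducing the topology of X that is G-invariant, i.e. d(g • x, g • y) = d(x, y) for all g ∈ G and x, y ∈ X. -/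
open Set Function TopologicalSpace Filter Topology

section Aux

variable (G : Type*) {X : Type*} [Group G] [MulAction G X]

/-- The `G`-invariant pseudo-distance associated to a bounded function `f`:
the supremum over `g : G` of `|f (g • x) - f (g • y)|`. -/
noncomputable def invSupDist (f : X → ℝ) (x y : X) : ℝ :=
  ⨆ g : G, |f (g • x) - f (g • y)|

variable {G} {f : X → ℝ}

lemma invSupDist_bddAbove (hb : ∀ z, f z ∈ Set.Icc (0:ℝ) 1) (x y : X) :
    BddAbove (Set.range fun g : G => |f (g • x) - f (g • y)|) := by
  refine ⟨1, ?_⟩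
  rintro _ ⟨g, rfl⟩
  have h1 := hb (g • x); have h2 := hb (g • y)
  rw [abs_sub_le_iff]
  constructor <;> linarith [h1.1, h1.2, h2.1, h2.2]

lemma invSupDist_nonneg (x y : X) : 0 ≤ invSupDist G f x y :=
  Real.iSup_nonneg fun _ => abs_nonneg _

lemma invSupDist_self (x : X) : invSupDist G f x x = 0 :=
  le_antisymm (Real.iSup_le (fun g => by simp) le_rfl) (invSupDist_nonneg x x)

lemma invSupDist_comm (x y : X) : invSupDist G f x y = invSupDist G f y x :=
  iSup_congr fun g => abs_sub_comm _ _

lemma invSupDist_triangle (hb : ∀ z, f z ∈ Set.Icc (0:ℝ) 1) (x y z : X) :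
    invSupDist G f x z ≤ invSupDist G f x y + invSupDist G f y z := by
  refine Real.iSup_le (fun g => ?_)
    (add_nonneg (invSupDist_nonneg x y) (invSupDist_nonneg y z))
  refine le_trans (abs_sub_le (f (g • x)) (f (g • y)) (f (g • z))) (add_le_add ?_ ?_)
  · exact le_ciSup (invSupDist_bddAbove hb x y) g
  · exact le_ciSup (invSupDist_bddAbove hb y z) g

lemma invSupDist_smul (hb : ∀ z, f z ∈ Set.Icc (0:ℝ) 1) (g : G) (x y : X) :
    invSupDist G f (g • x) (g • y) = invSupDist G f x y := by
  refine le_antisymm (Real.iSup_le (fun h => ?_) (invSupDist_nonneg x y))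
    (Real.iSup_le (fun h => ?_) (invSupDist_nonneg _ _))
  · have : h • g • x = (h * g) • x := (mul_smul h g x).symm
    have h2 : h • g • y = (h * g) • y := (mul_smul h g y).symm
    rw [this, h2]
    exact le_ciSup (invSupDist_bddAbove hb x y) (h * g)
  · have hx : h • x = (h * g⁻¹) • g • x := by rw [← mul_smul, inv_mul_cancel_right]
    have hy : h • y = (h * g⁻¹) • g • y := by rw [← mul_smul, inv_mul_cancel_right]
    rw [hx, hy]
    exact le_ciSup (invSupDist_bddAbove hb (g • x) (g • y)) (h * g⁻¹)

lemma abs_sub_le_invSupDist (hb : ∀ z, f z ∈ Set.Icc (0:ℝ) 1) (x y : X) :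
    |f x - f y| ≤ invSupDist G f x y := by
  simpa [invSupDist] using le_ciSup (invSupDist_bddAbove hb x y) (1 : G)

/-- Equicontinuity: for a proper action and `f` continuous with compact support, the family
`g ↦ f ∘ (g • ·)` is equicontinuous, hence `invSupDist` is small near the diagonal. -/
lemma eventually_invSupDist_le {G X : Type*} [Group G] [TopologicalSpace G]
    [TopologicalSpace X] [MulAction G X] [ContinuousSMul G X] [LocallyCompactSpace X]
    (hproper : IsProperMap (fun p : G × X => (p.1 • p.2, p.2)))
    {f : X → ℝ} (hf : Continuous f) (hfc : HasCompactSupport f)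
    (x : X) {ε : ℝ} (hε : 0 < ε) :
    ∀ᶠ y in 𝓝 x, invSupDist G f x y ≤ ε := by
  obtain ⟨C, hCc, hCmem⟩ := exists_compact_mem_nhds x
  set K : Set X := tsupport f with hK
  have hKc : IsCompact K := hfc
  set L : Set (G × X) := (fun p : G × X => (p.1 • p.2, p.2)) ⁻¹' (K ×ˢ C) with hL
  have hLc : IsCompact L := hproper.isCompact_preimage (hKc.prod hCc)
  set T : Set G := Prod.fst '' L with hT
  have hTc : IsCompact T := hLc.image continuous_fst
  set W : Set (G × X) := {p : G × X | |f (p.1 • p.2) - f (p.1 • x)| < ε} with hW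
  have hWo : IsOpen W := by
    have hcont : Continuous fun p : G × X => |f (p.1 • p.2) - f (p.1 • x)| :=
      ((hf.comp (continuous_fst.smul continuous_snd)).sub
        (hf.comp (continuous_fst.smul continuous_const))).abs
    exact isOpen_lt hcont continuous_const
  have hTW : T ×ˢ ({x} : Set X) ⊆ W := by
    rintro ⟨g, y⟩ ⟨-, hy⟩
    rcases hy with rfl
    simp [hW, hε]
  obtain ⟨U', V', hU'o, hV'o, hTU', hxV', hsub⟩ :=
    generalized_tube_lemma hTc isCompact_singleton hWo hTW
  have hxC : x ∈ C := mem_of_mem_nhds hCmem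
  filter_upwards [hCmem, hV'o.mem_nhds (hxV' rfl)] with y hyC hyV'
  refine Real.iSup_le (fun g => ?_) hε.le
  by_cases hg : g ∈ T
  · have hmem : (g, y) ∈ W := hsub ⟨hTU' hg, hyV'⟩
    have hlt : |f (g • y) - f (g • x)| < ε := hmem
    calc |f (g • x) - f (g • y)| = |f (g • y) - f (g • x)| := abs_sub_comm _ _
      _ ≤ ε := hlt.le
  · have h1 : f (g • y) = 0 := by
      by_contra h
      exact hg ⟨(g, y), ⟨subset_closure h, hyC⟩, rfl⟩
    have h2 : f (g • x) = 0 := by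
      by_contra h
      exact hg ⟨(g, x), ⟨subset_closure h, hxC⟩, rfl⟩
    simp [h1, h2, hε.le]

lemma min_one_add_le {a b : ℝ} (ha : 0 ≤ a) (hb : 0 ≤ b) :
    min 1 (a + b) ≤ min 1 a + min 1 b := by
  simp only [min_def]
  split_ifs <;> linarith

end Aux

/-- Let `G` be a locally compact Hausdorff topological group acting
properly and continuously on a locally compact, σ-compact, metrizable topological space
`X`. Then there exists a distance function on `X` inducing the topology of `X` that is
`G`-invariant: `d (g • x) (g • y) = d x y` for all `g : G` and `x y : X`. -/
theorem exists_invariant_metric_of_proper_action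
    {G X : Type*} [Group G] [TopologicalSpace G] [IsTopologicalGroup G]
    [LocallyCompactSpace G] [T2Space G]
    [TopologicalSpace X] [LocallyCompactSpace X] [SigmaCompactSpace X]
    [TopologicalSpace.MetrizableSpace X]
    [MulAction G X] [ContinuousSMul G X]
    (hproper : IsProperMap (fun p : G × X => (p.1 • p.2, p.2))) :
    ∃ m : MetricSpace X,
      m.toUniformSpace.toTopologicalSpace = ‹TopologicalSpace X› ∧
      ∀ (g : G) (x y : X), m.dist (g • x) (g • y) = m.dist x y := by
  classical
  haveI : SecondCountableTopology X := by
    letI : MetricSpace X := TopologicalSpace.metrizableSpaceMetric X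
    exact EMetric.secondCountable_of_sigmaCompact X
  set B : Set (Set X) := countableBasis X with hB
  -- index type: pairs of basis elements `(U₁, U₂)` with `closure U₁` compact and ⊆ `U₂`
  let I : Type _ := {p : Set X × Set X //
    (p.1 ∈ B ∧ p.2 ∈ B) ∧ IsCompact (closure p.1) ∧ closure p.1 ⊆ p.2}
  haveI : Countable {s // s ∈ B} := (countable_countableBasis X).to_subtype
  haveI : Countable I := by
    have hinj : Function.Injective
        (fun i : I => ((⟨i.1.1, i.2.1.1⟩, ⟨i.1.2, i.2.1.2⟩) :
          {s // s ∈ B} × {s // s ∈ B})) := by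
      intro i j hij
      have h1 : i.1.1 = j.1.1 := congrArg (fun q => q.1.1) hij
      have h2 : i.1.2 = j.1.2 := congrArg (fun q => q.2.1) hij
      exact Subtype.ext (Prod.ext_iff.2 ⟨h1, h2⟩)
    exact hinj.countable
  -- choose Urysohn functions
  have hexists : ∀ i : I, ∃ f : C(X, ℝ), EqOn f 1 (closure i.1.1) ∧ EqOn f 0 (i.1.2ᶜ) ∧
      HasCompactSupport f ∧ ∀ x, f x ∈ Icc (0 : ℝ) 1 := fun i =>
    exists_continuous_one_zero_of_isCompact i.2.2.1
      ((isBasis_countableBasis X).isOpen i.2.1.2).isClosed_compl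
      (disjoint_compl_right_iff_subset.mpr i.2.2.2)
  choose F hF1 hF0 hFc hFb using hexists
  have hFcont : ∀ i : I, Continuous (F i) := fun i => (F i).continuous
  -- weights
  obtain ⟨e, he⟩ := Countable.exists_injective_nat I
  set w : I → ℝ := fun i => (1 / 2 : ℝ) ^ (e i) with hw
  have hw_pos : ∀ i, 0 < w i := fun i => by positivity
  have hw_sum : Summable w :=
    (summable_geometric_of_lt_one (by norm_num) (by norm_num)).comp_injective he
  -- the distance
  set p : I → X → X → ℝ := fun i x y => invSupDist G (F i : X → ℝ) x y with hp
  set D : X → X → ℝ := fun x y => ∑' i : I, w i * min 1 (p i x y) with hD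
  have hterm_nonneg : ∀ i x y, 0 ≤ w i * min 1 (p i x y) := fun i x y =>
    mul_nonneg (hw_pos i).le (le_min zero_le_one (invSupDist_nonneg x y))
  have hterm_le : ∀ i x y, w i * min 1 (p i x y) ≤ w i := fun i x y => by
    have : min 1 (p i x y) ≤ 1 := min_le_left _ _
    nlinarith [hw_pos i]
  have hDsum : ∀ x y, Summable fun i => w i * min 1 (p i x y) := fun x y =>
    Summable.of_nonneg_of_le (fun i => hterm_nonneg i x y) (fun i => hterm_le i x y) hw_sum
  have hD_nonneg : ∀ x y, 0 ≤ D x y := fun x y =>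
    tsum_nonneg fun i => hterm_nonneg i x y
  -- basic metric axioms
  have hD_self : ∀ x, D x x = 0 := by
    intro x
    have : ∀ i : I, w i * min 1 (p i x x) = 0 := fun i => by
      simp [hp, invSupDist_self]
    simp only [hD, this, tsum_zero]
  have hD_comm : ∀ x y, D x y = D y x := fun x y =>
    tsum_congr fun i => by rw [hp]; simp only [invSupDist_comm x y]
  have hD_triangle : ∀ x y z, D x z ≤ D x y + D y z := by
    intro x y z
    have hle : ∀ i : I, w i * min 1 (p i x z) ≤
        w i * min 1 (p i x y) + w i * min 1 (p i y z) := by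
      intro i
      have h1 : min 1 (p i x z) ≤ min 1 (p i x y + p i y z) :=
        min_le_min le_rfl (invSupDist_triangle (hFb i) x y z)
      have h2 : min 1 (p i x y + p i y z) ≤ min 1 (p i x y) + min 1 (p i y z) :=
        min_one_add_le (invSupDist_nonneg x y) (invSupDist_nonneg y z)
      calc w i * min 1 (p i x z) ≤ w i * (min 1 (p i x y) + min 1 (p i y z)) := by
            exact mul_le_mul_of_nonneg_left (h1.trans h2) (hw_pos i).le
        _ = w i * min 1 (p i x y) + w i * min 1 (p i y z) := by ring
    calc D x z ≤ ∑' i : I, (w i * min 1 (p i x y) + w i * min 1 (p i y z)) :=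
          Summable.tsum_le_tsum hle (hDsum x z) ((hDsum x y).add (hDsum y z))
      _ = D x y + D y z := Summable.tsum_add (hDsum x y) (hDsum y z)
  -- invariance
  have hD_inv : ∀ (g : G) (x y : X), D (g • x) (g • y) = D x y := by
    intro g x y
    refine tsum_congr fun i => ?_
    rw [hp]
    simp only [invSupDist_smul (hFb i) g x y]
  -- separation: inside every open set around `x` there is a suitable pair
  have sep : ∀ (x : X) (V : Set X), IsOpen V → x ∈ V →
      ∃ i : I, x ∈ closure i.1.1 ∧ i.1.2 ⊆ V := by
    intro x V hV hxV
    obtain ⟨K, hKc, hxK, hKV⟩ := exists_compact_subset hV hxV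
    obtain ⟨U₂, hU₂B, hxU₂, hU₂K⟩ :=
      (isBasis_countableBasis X).exists_subset_of_mem_open hxK isOpen_interior
    have hU₂o : IsOpen U₂ := (isBasis_countableBasis X).isOpen hU₂B
    obtain ⟨K', hK'c, hxK', hK'U₂⟩ := exists_compact_subset hU₂o hxU₂
    obtain ⟨U₁, hU₁B, hxU₁, hU₁K'⟩ :=
      (isBasis_countableBasis X).exists_subset_of_mem_open hxK' isOpen_interior
    have hclU₁ : closure U₁ ⊆ K' :=
      closure_minimal (hU₁K'.trans interior_subset) hK'c.isClosed
    have hclc : IsCompact (closure U₁) := hK'c.of_isClosed_subset isClosed_closure hclU₁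
    refine ⟨⟨(U₁, U₂), ⟨hU₁B, hU₂B⟩, hclc, hclU₁.trans hK'U₂⟩, subset_closure hxU₁, ?_⟩
    exact hU₂K.trans (interior_subset.trans hKV)
  -- lower bound: a single term bounds `D` from below
  have hD_single : ∀ (i : I) (x y : X), w i * min 1 (p i x y) ≤ D x y := by
    intro i x y
    exact Summable.le_tsum (hDsum x y) i fun j _ => hterm_nonneg j x y
  -- if `x ∈ i.1.1`'s closure and `y ∉ i.1.2`, then `p i x y ≥ 1`
  have hp_ge : ∀ (i : I) (x y : X), x ∈ closure i.1.1 → y ∉ i.1.2 → 1 ≤ p i x y := by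
    intro i x y hx hy
    have h1 : (F i) x = 1 := hF1 i hx
    have h2 : (F i) y = 0 := hF0 i hy
    have := abs_sub_le_invSupDist (G := G) (hFb i) x y
    rw [h1, h2] at this
    simpa using this
  -- continuity of `D x ·` at `x`
  have contD : ∀ (x : X) {ε : ℝ}, 0 < ε → ∀ᶠ y in 𝓝 x, D x y < ε := by
    intro x ε hε
    set Wt : ℝ := ∑' i, w i with hWt
    have hWt0 : 0 ≤ Wt := tsum_nonneg fun i => (hw_pos i).le
    obtain ⟨s₀, hs₀⟩ :
        ∃ s₀ : Finset I, (∑' i : {i // i ∉ s₀}, w i) < ε / 2 :=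
      ((tendsto_order.1 (tendsto_tsum_compl_atTop_zero w)).2 _ (half_pos hε)).exists
    set ε' : ℝ := ε / (2 * (Wt + 1)) with hε'
    have hε'pos : 0 < ε' := by positivity
    have hev : ∀ᶠ y in 𝓝 x, ∀ i ∈ s₀, p i x y ≤ ε' :=
      eventually_all_finset s₀ |>.2 fun i _ =>
        eventually_invSupDist_le hproper (hFcont i) (hFc i) x hε'pos
    filter_upwards [hev] with y hy
    have hsplit : D x y = (∑ i ∈ s₀, w i * min 1 (p i x y)) +
        ∑' i : {i // i ∉ s₀}, w i * min 1 (p i x y) :=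
      (Summable.sum_add_tsum_subtype_compl (hDsum x y) s₀).symm
    have hbound1 : (∑ i ∈ s₀, w i * min 1 (p i x y)) ≤ ε' * Wt := by
      calc (∑ i ∈ s₀, w i * min 1 (p i x y)) ≤ ∑ i ∈ s₀, w i * ε' := by
            refine Finset.sum_le_sum fun i hi => ?_
            exact mul_le_mul_of_nonneg_left ((min_le_right _ _).trans (hy i hi)) (hw_pos i).le
        _ = ε' * ∑ i ∈ s₀, w i := by rw [Finset.mul_sum]; simp [mul_comm]
        _ ≤ ε' * Wt := by
            refine mul_le_mul_of_nonneg_left ?_ hε'pos.le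
            exact Summable.sum_le_tsum s₀ (fun i _ => (hw_pos i).le) hw_sum
    have hbound2 : (∑' i : {i // i ∉ s₀}, w i * min 1 (p i x y)) < ε / 2 := by
      refine lt_of_le_of_lt ?_ hs₀
      exact Summable.tsum_le_tsum (fun i => hterm_le i.1 x y)
        ((hDsum x y).comp_injective Subtype.coe_injective)
        (hw_sum.comp_injective Subtype.coe_injective)
    have hkey : ε' * (Wt + 1) = ε / 2 := by
      rw [hε']; field_simp
    have hbound1' : ε' * Wt ≤ ε / 2 := by nlinarith [hε'pos.le]
    rw [hsplit]
    calc (∑ i ∈ s₀, w i * min 1 (p i x y)) + ∑' i : {i // i ∉ s₀}, w i * min 1 (p i x y)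
        < ε / 2 + ε / 2 := add_lt_add_of_le_of_lt (hbound1.trans hbound1') hbound2
      _ = ε := add_halves ε
  -- the topology induced by `D` is the given one
  have Htop : ∀ s : Set X, IsOpen s ↔ ∀ x ∈ s, ∃ ε > 0, ∀ y, D x y < ε → y ∈ s := by
    intro s
    constructor
    · intro hs x hx
      obtain ⟨i, hxi, hisub⟩ := sep x s hs hx
      refine ⟨w i, hw_pos i, fun y hDxy => ?_⟩
      by_contra hy
      have h1 : 1 ≤ p i x y := hp_ge i x y hxi (fun h => hy (hisub h))
      have : w i * min 1 (p i x y) = w i := by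
        rw [min_eq_left h1, mul_one]
      have hge : w i ≤ D x y := by rw [← this]; exact hD_single i x y
      exact absurd hDxy (not_lt.mpr hge)
    · intro H
      rw [isOpen_iff_mem_nhds]
      intro x hx
      obtain ⟨ε, hε, hball⟩ := H x hx
      exact Filter.mem_of_superset ((contD x hε).mono fun y hy => hball y hy)
        (fun y hy => hy)
  -- separation (eq_of_dist_eq_zero)
  have hD_eq : ∀ x y : X, D x y = 0 → x = y := by
    intro x y h
    by_contra hne
    have hV : IsOpen ({y}ᶜ : Set X) := isOpen_compl_singleton
    obtain ⟨i, hxi, hisub⟩ := sep x {y}ᶜ hV hne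
    have h1 : 1 ≤ p i x y := hp_ge i x y hxi (fun hmem => (hisub hmem) rfl)
    have hpos : 0 < w i * min 1 (p i x y) := by
      rw [min_eq_left h1, mul_one]; exact hw_pos i
    have : 0 < D x y := lt_of_lt_of_le hpos (hD_single i x y)
    exact absurd h (ne_of_gt this)
  refine ⟨MetricSpace.ofDistTopology D hD_self hD_comm hD_triangle Htop hD_eq, rfl, ?_⟩
  exact hD_inv
end

section
/- Let X be a proper metric space (i.e. all closed balls of X are compact). Endow the group Isom(X) of surjective isometries of X onto itself with the compact-open topology. Then the natural action of Isom(X) on X is a proper action: the map Isom(X) × X → X × X, (φ, x) ↦ (φ(x), x), is continuous and proper. -/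
/-- The compact-open topology on the group `X ≃ᵢ X` of surjective isometries of a metric
space `X` onto itself, induced from the compact-open topology on continuous maps `C(X, X)`
via the natural inclusion. -/
noncomputable instance isometryEquivCompactOpen (X : Type*) [MetricSpace X] :
    TopologicalSpace (X ≃ᵢ X) :=
  TopologicalSpace.induced
    (fun φ : X ≃ᵢ X => (⟨φ, φ.continuous⟩ : C(X, X))) ContinuousMap.compactOpen

open Set Filter Topology Metric

/-- The set of (functions underlying) surjective isometries moving a base point by at most `r`
is closed in the product (pointwise convergence) topology. The key point is that a pointwise
limit of surjective isometries of a proper metric space is surjective. -/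
private lemma isClosed_coe_isometryEquiv {X : Type*} [MetricSpace X] [ProperSpace X]
    (x₀ : X) (r : ℝ) :
    IsClosed ((fun φ : X ≃ᵢ X => ⇑φ) '' {φ : X ≃ᵢ X | dist (φ x₀) x₀ ≤ r}) := by
  classical
  set A : Set (X → X) := (fun φ : X ≃ᵢ X => ⇑φ) '' {φ : X ≃ᵢ X | dist (φ x₀) x₀ ≤ r} with hA
  refine isClosed_of_closure_subset fun f hf => ?_
  -- `f` is an isometry
  have hiso : Isometry f := by
    refine Isometry.of_dist_eq fun a b => ?_
    have hC : IsClosed {g : X → X | dist (g a) (g b) = dist a b} :=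
      isClosed_eq ((continuous_apply a).dist (continuous_apply b)) continuous_const
    have hsub : A ⊆ {g : X → X | dist (g a) (g b) = dist a b} := by
      rintro g ⟨φ, -, rfl⟩; exact φ.dist_eq a b
    exact closure_minimal hsub hC hf
  -- `f` moves `x₀` by at most `r`
  have hr : dist (f x₀) x₀ ≤ r := by
    have hC : IsClosed {g : X → X | dist (g x₀) x₀ ≤ r} :=
      isClosed_le ((continuous_apply x₀).dist continuous_const) continuous_const
    have hsub : A ⊆ {g : X → X | dist (g x₀) x₀ ≤ r} := by
      rintro g ⟨φ, hφ, rfl⟩; exact hφ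
    exact closure_minimal hsub hC hf
  -- `f` is surjective
  obtain ⟨u, huA, hu⟩ := mem_closure_iff_ultrafilter.mp hf
  have hsurj : Function.Surjective f := by
    intro y
    -- choose inverses
    set inv : (X → X) → X → X := fun g => if h : g ∈ A then ⇑(h.choose.symm) else id with hinv
    have hball : ∀ g ∈ A, inv g y ∈ closedBall x₀ (dist y x₀ + r) := by
      intro g hg
      have hspec := hg.choose_spec
      set φ := hg.choose with hφdef
      simp only [hinv, dif_pos hg]
      have h1 : dist (φ.symm y) x₀ = dist (φ (φ.symm y)) (φ x₀) := (φ.dist_eq _ _).symm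
      rw [mem_closedBall, h1, φ.apply_symm_apply]
      calc dist y (φ x₀) ≤ dist y x₀ + dist x₀ (φ x₀) := dist_triangle _ _ _
        _ ≤ dist y x₀ + r := by
            have hφr : dist (φ x₀) x₀ ≤ r := hspec.1
            rw [dist_comm x₀]; linarith
    have hmem : closedBall x₀ (dist y x₀ + r) ∈ (u.map fun g => inv g y) :=
      Filter.mem_map.mpr (Filter.mem_of_superset huA fun g hg => hball g hg)
    obtain ⟨z, _, hzt⟩ := (isCompact_closedBall x₀ (dist y x₀ + r)).ultrafilter_le_nhds
      (u.map fun g => inv g y) (le_principal_iff.mpr hmem)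
    refine ⟨z, ?_⟩
    have key : ∀ ε > (0 : ℝ), dist (f z) y < ε := by
      intro ε hε
      have hεpos : (0 : ℝ) < ε / 2 := by linarith
      have htz : Tendsto (fun g : X → X => g z) ↑u (𝓝 (f z)) :=
        ((continuous_apply z).tendsto f).mono_left hu
      have h1 : {g : X → X | dist (g z) (f z) < ε / 2} ∈ u := by
        have := htz (ball_mem_nhds (f z) hεpos)
        exact this
      have h2 : {g : X → X | dist (inv g y) z < ε / 2} ∈ u := by
        have := hzt (ball_mem_nhds z hεpos)
        exact this
      obtain ⟨g, hg1, hg2, hgA⟩ :=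
        Filter.nonempty_of_mem (inter_mem h1 (inter_mem h2 huA))
      have hspec := hgA.choose_spec
      set φ := hgA.choose with hφdef
      have hgφ : g = ⇑φ := hspec.2.symm
      have hinvg : inv g y = φ.symm y := by simp only [hinv, dif_pos hgA]; rfl
      have hgy : dist (g z) y = dist z (inv g y) := by
        rw [hinvg, hgφ]
        calc dist (φ z) y = dist (φ z) (φ (φ.symm y)) := by rw [φ.apply_symm_apply]
          _ = dist z (φ.symm y) := φ.dist_eq _ _
      calc dist (f z) y ≤ dist (f z) (g z) + dist (g z) y := dist_triangle _ _ _
        _ = dist (f z) (g z) + dist z (inv g y) := by rw [hgy]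
        _ < ε / 2 + ε / 2 :=
            add_lt_add (by rw [dist_comm]; exact hg1) (by rw [dist_comm]; exact hg2)
        _ = ε := by ring
    by_contra hne
    have hpos : 0 < dist (f z) y := dist_pos.mpr hne
    exact lt_irrefl _ (key _ hpos)
  -- assemble the isometry equivalence
  refine ⟨⟨Equiv.ofBijective f ⟨hiso.injective, hsurj⟩, hiso⟩, hr, rfl⟩

/-- In a proper metric space, the set of surjective isometries moving a base point by at most
`r` is compact in the compact-open topology. -/
private lemma isCompact_isometryEquiv_ball {X : Type*} [MetricSpace X] [ProperSpace X]
    (x₀ : X) (r : ℝ) : IsCompact {φ : X ≃ᵢ X | dist (φ x₀) x₀ ≤ r} := by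
  set J : (X ≃ᵢ X) → C(X, X) := fun φ => ⟨φ, φ.continuous⟩ with hJ
  have hJind : Topology.IsInducing J := ⟨rfl⟩
  set T : Set (X ≃ᵢ X) := {φ : X ≃ᵢ X | dist (φ x₀) x₀ ≤ r} with hT
  rw [hJind.isCompact_iff]
  apply ArzelaAscoli.isCompact_of_equicontinuous
  · -- pointwise image is compact
    have himg : ContinuousMap.toFun '' (J '' T) = (fun φ : X ≃ᵢ X => ⇑φ) '' T := by
      rw [Set.image_image]
    rw [himg]
    have hsub : (fun φ : X ≃ᵢ X => ⇑φ) '' T ⊆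
        Set.pi univ fun x => closedBall x₀ (dist x x₀ + r) := by
      rintro f ⟨φ, hφ, rfl⟩ x -
      rw [mem_closedBall]
      calc dist (φ x) x₀ ≤ dist (φ x) (φ x₀) + dist (φ x₀) x₀ := dist_triangle _ _ _
        _ = dist x x₀ + dist (φ x₀) x₀ := by rw [φ.dist_eq]
        _ ≤ dist x x₀ + r := by
            have hφr : dist (φ x₀) x₀ ≤ r := hφ
            linarith
    exact (isCompact_univ_pi fun x => isCompact_closedBall _ _).of_isClosed_subset
      (isClosed_coe_isometryEquiv x₀ r) hsub
  · -- equicontinuity: all maps are isometries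
    apply Metric.equicontinuous_of_continuity_modulus (fun t => t) tendsto_id
    intro x y s
    obtain ⟨φ, -, hφ⟩ := s.2
    have hc : ((s : C(X, X)) : X → X) = ⇑φ := by rw [← hφ]; rfl
    show dist ((s : C(X, X)) x) ((s : C(X, X)) y) ≤ dist x y
    rw [hc, φ.dist_eq]

/-- Let `X` be a proper metric space (all closed balls are compact).
Endow the group `Isom(X) = X ≃ᵢ X` of surjective isometries of `X` onto itself with the
compact-open topology. Then the natural action of `Isom(X)` on `X` is a proper action:
the map `Isom(X) × X → X × X`, `(φ, x) ↦ (φ x, x)`, is continuous and proper. -/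
theorem isProperMap_isometryEquiv_smul (X : Type*) [MetricSpace X] [ProperSpace X] :
    IsProperMap (fun p : (X ≃ᵢ X) × X => (p.1 p.2, p.2)) := by
  rw [isProperMap_iff_isCompact_preimage]
  have hJc : Continuous (fun φ : X ≃ᵢ X => (⟨φ, φ.continuous⟩ : C(X, X))) :=
    continuous_induced_dom
  have heval : Continuous fun p : (X ≃ᵢ X) × X => p.1 p.2 := by
    have h : Continuous fun p : C(X, X) × X => p.1 p.2 := continuous_eval
    exact h.comp ((hJc.comp continuous_fst).prodMk continuous_snd)
  have hcont : Continuous fun p : (X ≃ᵢ X) × X => (p.1 p.2, p.2) :=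
    heval.prodMk continuous_snd
  refine ⟨hcont, fun K hK => ?_⟩
  rcases K.eq_empty_or_nonempty with rfl | ⟨⟨y, x₀⟩, hyx⟩
  · simp
  obtain ⟨R, hR⟩ : ∃ R, K ⊆ closedBall (x₀, x₀) R :=
    hK.isBounded.subset_closedBall (x₀, x₀)
  rw [← closedBall_prod_same] at hR
  have hsub : (fun p : (X ≃ᵢ X) × X => (p.1 p.2, p.2)) ⁻¹' K ⊆
      {φ : X ≃ᵢ X | dist (φ x₀) x₀ ≤ R + R} ×ˢ closedBall x₀ R := by
    rintro ⟨φ, x⟩ hmem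
    obtain ⟨h1, h2⟩ := hR hmem
    rw [mem_closedBall] at h1 h2
    refine ⟨?_, h2⟩
    calc dist (φ x₀) x₀ ≤ dist (φ x₀) (φ x) + dist (φ x) x₀ := dist_triangle _ _ _
      _ = dist x₀ x + dist (φ x) x₀ := by rw [φ.dist_eq]
      _ ≤ R + R := by rw [dist_comm]; exact add_le_add h2 h1
  exact ((isCompact_isometryEquiv_ball x₀ (R + R)).prod
    (isCompact_closedBall x₀ R)).of_isClosed_subset (hK.isClosed.preimage hcont) hsub
end

section
/- Let X be a locally compact, σ-compact, metrizable topological space with the property that for every distance function d on X inducing the topology of X, the group of surjective isometries of (X, d) is finite ('few symmetries'). If G is a locally compact Hausdorff topological group acting properly, continuously, and faithfully on X, then G is a finite group. -/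
set_option linter.unusedSectionVars false
set_option linter.unusedVariables false

open MeasureTheory Metric Set Function Topology

section Basic

lemma F_triangle {X : Type*} [MetricSpace X] {φ : X → ℝ} (hφ0 : ∀ z, 0 ≤ φ z)
    (hlip : ∀ y z : X, φ z ≤ φ y + dist y z) (x y z : X) :
    min (dist x z) (φ x + φ z) ≤
      min (dist x y) (φ x + φ y) + min (dist y z) (φ y + φ z) := by
  have h1 : φ z ≤ φ y + dist y z := hlip y z
  have h2 : φ x ≤ φ y + dist x y := by
    have := hlip y x; rwa [dist_comm] at this
  have h3 := dist_triangle x y z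
  have h4 := hφ0 y
  rcases min_cases (dist x y) (φ x + φ y) with ⟨e1, _⟩ | ⟨e1, _⟩ <;>
    rcases min_cases (dist y z) (φ y + φ z) with ⟨e2, _⟩ | ⟨e2, _⟩ <;>
      rw [e1, e2] <;>
        refine min_le_iff.2 ?_ <;>
          first
            | exact Or.inl (by linarith)
            | exact Or.inr (by linarith)

lemma FewSym.min1_triangle {a b c : ℝ} (hb : 0 ≤ b) (hc : 0 ≤ c) (h : a ≤ b + c) :
    min a 1 ≤ min b 1 + min c 1 := by
  have hb1 : (0:ℝ) ≤ min b 1 := le_min hb zero_le_one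
  have hc1 : (0:ℝ) ≤ min c 1 := le_min hc zero_le_one
  rcases le_total 1 b with h1 | h1
  · have : min a 1 ≤ 1 := min_le_right _ _
    rw [min_eq_right h1] at *
    linarith
  rcases le_total 1 c with h2 | h2
  · have : min a 1 ≤ 1 := min_le_right _ _
    rw [min_eq_right h2] at *
    linarith
  · rw [min_eq_left h1, min_eq_left h2]
    exact le_trans (min_le_left _ _) h

lemma FewSym.isCompact_transporter {X : Type*} [TopologicalSpace X] {G : Type*} [Group G]
    [TopologicalSpace G] [MulAction G X]
    (hproper : IsProperMap (fun p : G × X => (p.1 • p.2, p.2)))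
    {A K : Set X} (hA : IsCompact A) (hK : IsCompact K) :
    IsCompact {g : G | ∃ a ∈ A, g • a ∈ K} := by
  have h := hproper.isCompact_preimage (hK.prod hA)
  have heq : {g : G | ∃ a ∈ A, g • a ∈ K}
      = Prod.fst '' ((fun p : G × X => (p.1 • p.2, p.2)) ⁻¹' (K ×ˢ A)) := by
    ext g
    simp only [mem_setOf_eq, mem_image, mem_preimage, mem_prod, Prod.exists]
    constructor
    · rintro ⟨a, ha, hga⟩; exact ⟨g, a, ⟨hga, ha⟩, rfl⟩
    · rintro ⟨g', x, ⟨hgx, hx⟩, rfl⟩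
      exact ⟨x, hx, hgx⟩
  rw [heq]
  exact h.image continuous_fst

end Basic

open MeasureTheory Metric Set Function Topology

namespace FewSym

section Measureful

variable {X : Type*} [MetricSpace X] {G : Type*} [Group G] [TopologicalSpace G]
  [IsTopologicalGroup G] [T2Space G] [MulAction G X] [ContinuousSMul G X]
  [MeasurableSpace G] [BorelSpace G]
  (ν : Measure G) [IsFiniteMeasureOnCompacts ν]
  (φ : X → ℝ) {C : Set X} {ε : ℝ}

/-- The truncated distance. -/
noncomputable def Ff (x y : X) : ℝ := min (dist x y) (φ x + φ y)

lemma Ff_nonneg (hφ0 : ∀ z, 0 ≤ φ z) (x y : X) : 0 ≤ Ff φ x y :=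
  le_min dist_nonneg (add_nonneg (hφ0 x) (hφ0 y))

lemma continuous_Ff_smul (hφc : Continuous φ) (x y : X) :
    Continuous fun g : G => Ff φ (g • x) (g • y) := by
  have h1 : Continuous fun g : G => g • x := continuous_id.smul continuous_const
  have h2 : Continuous fun g : G => g • y := continuous_id.smul continuous_const
  exact (h1.dist h2).min ((hφc.comp h1).add (hφc.comp h2))

lemma hasCompactSupport_Ff_smul
    (hproper : IsProperMap (fun p : G × X => (p.1 • p.2, p.2)))
    (hC : IsCompact C) (hsupp : ∀ z, φ z ≠ 0 → z ∈ C) (x y : X) :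
    HasCompactSupport fun g : G => Ff φ (g • x) (g • y) := by
  refine HasCompactSupport.intro
    ((isCompact_transporter hproper isCompact_singleton hC (A := {x})).union
      (isCompact_transporter hproper isCompact_singleton hC (A := {y}))) ?_
  intro g hg
  simp only [mem_union, mem_setOf_eq, not_or, mem_singleton_iff] at hg
  have h1 : φ (g • x) = 0 := by
    by_contra h
    exact hg.1 ⟨x, rfl, hsupp _ h⟩
  have h2 : φ (g • y) = 0 := by
    by_contra h
    exact hg.2 ⟨y, rfl, hsupp _ h⟩
  simp [Ff, h1, h2, min_eq_right dist_nonneg]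

lemma integrable_Ff_smul
    (hproper : IsProperMap (fun p : G × X => (p.1 • p.2, p.2)))
    (hφc : Continuous φ) (hC : IsCompact C) (hsupp : ∀ z, φ z ≠ 0 → z ∈ C) (x y : X) :
    Integrable (fun g : G => Ff φ (g • x) (g • y)) ν :=
  (continuous_Ff_smul φ hφc x y).integrable_of_hasCompactSupport
    (hasCompactSupport_Ff_smul φ hproper hC hsupp x y)

/-- The averaged pseudodistance. -/
noncomputable def Dd (x y : X) : ℝ := ∫ g, Ff φ (g • x) (g • y) ∂ν

lemma Dd_nonneg (hφ0 : ∀ z, 0 ≤ φ z) (x y : X) : 0 ≤ Dd ν φ x y :=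
  integral_nonneg fun g => Ff_nonneg φ hφ0 _ _

lemma Dd_self (hφ0 : ∀ z, 0 ≤ φ z) (x : X) : Dd ν φ x x = 0 := by
  have : ∀ g : G, Ff φ (g • x) (g • x) = 0 := by
    intro g
    simp [Ff, min_eq_left (add_nonneg (hφ0 _) (hφ0 _))]
  simp [Dd, this]

lemma Dd_comm (x y : X) : Dd ν φ x y = Dd ν φ y x := by
  unfold Dd Ff
  congr 1
  ext g
  rw [dist_comm, add_comm]

lemma Dd_triangle
    (hproper : IsProperMap (fun p : G × X => (p.1 • p.2, p.2)))
    (hφ0 : ∀ z, 0 ≤ φ z) (hφc : Continuous φ) (hC : IsCompact C)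
    (hsupp : ∀ z, φ z ≠ 0 → z ∈ C)
    (hlip : ∀ y z : X, φ z ≤ φ y + dist y z) (x y z : X) :
    Dd ν φ x z ≤ Dd ν φ x y + Dd ν φ y z := by
  have h := integral_add (integrable_Ff_smul ν φ hproper hφc hC hsupp x y)
    (integrable_Ff_smul ν φ hproper hφc hC hsupp y z)
  rw [Dd, Dd, Dd, ← h]
  refine integral_mono (integrable_Ff_smul ν φ hproper hφc hC hsupp x z)
    ((integrable_Ff_smul ν φ hproper hφc hC hsupp x y).add
      (integrable_Ff_smul ν φ hproper hφc hC hsupp y z)) fun g => ?_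
  exact F_triangle hφ0 hlip (g • x) (g • y) (g • z)

lemma Dd_invariant [ν.IsMulRightInvariant] (h : G) (x y : X) :
    Dd ν φ (h • x) (h • y) = Dd ν φ x y := by
  unfold Dd
  simp_rw [smul_smul]
  exact integral_mul_right_eq_self (fun g : G => Ff φ (g • x) (g • y)) h

lemma Dd_continuous [LocallyCompactSpace X]
    (hproper : IsProperMap (fun p : G × X => (p.1 • p.2, p.2)))
    (hφ0 : ∀ z, 0 ≤ φ z) (hφc : Continuous φ) (hC : IsCompact C)
    (hsupp : ∀ z, φ z ≠ 0 → z ∈ C) (hφε : ∀ z, φ z ≤ ε) (x : X) :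
    Continuous fun y => Dd ν φ x y := by
  refine continuous_iff_continuousAt.2 fun y₀ => ?_
  obtain ⟨Q, hQc, hQmem⟩ := exists_compact_mem_nhds y₀
  set T : Set G := {g : G | ∃ a ∈ ({x} : Set X), g • a ∈ C} ∪ {g : G | ∃ a ∈ Q, g • a ∈ C}
    with hT_def
  have hTc : IsCompact T :=
    (isCompact_transporter hproper isCompact_singleton hC).union
      (isCompact_transporter hproper hQc hC)
  refine continuousAt_of_dominated (bound := T.indicator fun _ => 2 * ε)
    (.of_forall fun y => ((continuous_Ff_smul φ hφc x y).aestronglyMeasurable)) ?_ ?_ ?_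
  · filter_upwards [hQmem] with y hy
    refine .of_forall fun g => ?_
    rw [Real.norm_of_nonneg (Ff_nonneg φ hφ0 _ _)]
    by_cases hg : g ∈ T
    · rw [indicator_of_mem hg]
      exact le_trans (min_le_right _ _) (by linarith [hφε (g • x), hφε (g • y)])
    · rw [indicator_of_notMem hg]
      simp only [hT_def, mem_union, mem_setOf_eq, not_or, mem_singleton_iff] at hg
      have h1 : φ (g • x) = 0 := by
        by_contra h; exact hg.1 ⟨x, rfl, hsupp _ h⟩
      have h2 : φ (g • y) = 0 := by
        by_contra h; exact hg.2 ⟨y, hy, hsupp _ h⟩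
      simp [Ff, h1, h2, min_eq_right dist_nonneg]
  · rw [integrable_indicator_iff hTc.isClosed.measurableSet]
    exact integrableOn_const hTc.measure_lt_top.ne
  · refine .of_forall fun g => ?_
    have h2 : Continuous fun y : X => g • y := continuous_const.smul continuous_id
    exact ((continuous_const.dist h2).min
      (continuous_const.add (hφc.comp h2))).continuousAt

lemma Dd_pos [ν.IsOpenPosMeasure]
    (hproper : IsProperMap (fun p : G × X => (p.1 • p.2, p.2)))
    (hφ0 : ∀ z, 0 ≤ φ z) (hφc : Continuous φ) (hC : IsCompact C)
    (hsupp : ∀ z, φ z ≠ 0 → z ∈ C) {x y : X} (hpos : 0 < Ff φ x y) :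
    0 < Dd ν φ x y := by
  rw [Dd, integral_pos_iff_support_of_nonneg (fun g => Ff_nonneg φ hφ0 _ _)
    (integrable_Ff_smul ν φ hproper hφc hC hsupp x y)]
  have hO : IsOpen {g : G | 0 < Ff φ (g • x) (g • y)} :=
    isOpen_lt continuous_const (continuous_Ff_smul φ hφc x y)
  have h1 : (1 : G) ∈ {g : G | 0 < Ff φ (g • x) (g • y)} := by
    simpa using hpos
  refine lt_of_lt_of_le (hO.measure_pos ν ⟨1, h1⟩) (measure_mono ?_)
  intro g hg
  exact ne_of_gt hg

lemma Dd_lower {U : Set G} (hU : MeasurableSet U) (hνU : ν U ≠ ⊤) {c : ℝ} {x y : X}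
    (hproper : IsProperMap (fun p : G × X => (p.1 • p.2, p.2)))
    (hφ0 : ∀ z, 0 ≤ φ z) (hφc : Continuous φ) (hC : IsCompact C)
    (hsupp : ∀ z, φ z ≠ 0 → z ∈ C)
    (hc : ∀ g ∈ U, c ≤ Ff φ (g • x) (g • y)) :
    c * (ν U).toReal ≤ Dd ν φ x y := by
  have hint := integrable_Ff_smul ν φ hproper hφc hC hsupp x y
  refine le_trans (le_trans (le_of_eq (by rw [smul_eq_mul, mul_comm]; rfl))
    (setIntegral_ge_of_const_le hU hνU hc hint.integrableOn)) ?_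
  exact setIntegral_le_integral hint (.of_forall fun g => Ff_nonneg φ hφ0 _ _)

end Measureful

end FewSym

namespace FewSym

theorem exists_invariant_metric {X : Type*} [MetricSpace X] [LocallyCompactSpace X]
    [SigmaCompactSpace X] [Nonempty X]
    {G : Type*} [Group G] [TopologicalSpace G] [IsTopologicalGroup G]
    [LocallyCompactSpace G] [T2Space G] [MulAction G X] [ContinuousSMul G X]
    (hproper : IsProperMap (fun p : G × X => (p.1 • p.2, p.2))) :
    ∃ D : X → X → ℝ,
      (∀ x, D x x = 0) ∧ (∀ x y, D x y = D y x) ∧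
      (∀ x y z, D x z ≤ D x y + D y z) ∧
      (∀ x y, x ≠ y → 0 < D x y) ∧
      (∀ (g : G) (x y : X), D (g • x) (g • y) = D x y) ∧
      (∀ x, Continuous (D x)) ∧
      (∀ (x : X) (V : Set X), IsOpen V → x ∈ V → ∃ δ > 0, ∀ y, D x y < δ → y ∈ V) := by
  borelize G
  set μ : Measure G := Measure.haar
  set ν : Measure G := μ.inv with hν_def
  haveI : IsFiniteMeasureOnCompacts ν := by
    constructor
    intro K hK
    rw [hν_def, Measure.inv_apply]
    exact hK.inv.measure_lt_top
  haveI : ν.IsOpenPosMeasure := by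
    constructor
    intro U hU hne
    rw [hν_def, Measure.inv_apply]
    exact (hU.inv).measure_ne_zero μ hne.inv
  -- the exhaustion
  obtain ⟨x₀⟩ := ‹Nonempty X›
  set K : ℕ → Set X := fun n => compactCovering X n ∪ {x₀} with hK_def
  have hKc : ∀ n, IsCompact (K n) := fun n =>
    (isCompact_compactCovering X n).union isCompact_singleton
  have hKne : ∀ n, (K n).Nonempty := fun n => ⟨x₀, Or.inr rfl⟩
  have hC : ∀ n, ∃ C, IsCompact C ∧ K n ⊆ interior C := fun n =>
    exists_compact_superset (hKc n)
  choose C hCc hKC using hC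
  have hε : ∀ n, ∃ ε > 0, thickening ε (K n) ⊆ interior (C n) := fun n =>
    (hKc n).exists_thickening_subset_open isOpen_interior (hKC n)
  choose ε hε0 hthick using hε
  -- the cutoff functions
  set φ : ℕ → X → ℝ := fun n z => max (ε n - infDist z (K n)) 0 with hφ_def
  have hφ0 : ∀ n z, 0 ≤ φ n z := fun n z => le_max_right _ _
  have hφle : ∀ n z, φ n z ≤ ε n := fun n z =>
    max_le (by linarith [infDist_nonneg (s := K n) (x := z)]) (hε0 n).le
  have hφlip : ∀ n (y z : X), φ n z ≤ φ n y + dist y z := by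
    intro n y z
    have h1 : infDist y (K n) ≤ infDist z (K n) + dist y z :=
      infDist_le_infDist_add_dist
    have h2 : ε n - infDist y (K n) ≤ φ n y := le_max_left _ _
    refine max_le (by linarith) ?_
    have := hφ0 n y
    have := dist_nonneg (x := y) (y := z)
    linarith
  have hφK : ∀ n, ∀ z ∈ K n, φ n z = ε n := by
    intro n z hz
    rw [hφ_def]
    simp [infDist_zero_of_mem hz, max_eq_left (hε0 n).le]
  have hφsupp : ∀ n z, φ n z ≠ 0 → z ∈ C n := by
    intro n z hz
    have h1 : 0 < ε n - infDist z (K n) := by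
      by_contra h
      exact hz (max_eq_right (not_lt.1 h))
    have h2 : z ∈ thickening (ε n) (K n) :=
      (mem_thickening_iff_infDist_lt (hKne n)).2 (by linarith)
    exact interior_subset (hthick n h2)
  have hφcont : ∀ n, Continuous (φ n) := fun n =>
    ((continuous_const.sub (continuous_infDist_pt (K n))).max continuous_const)
  -- the averaged distances
  set D0 : ℕ → X → X → ℝ := fun n x y => Dd ν (φ n) x y with hD0_def
  have hD0_nonneg : ∀ n x y, 0 ≤ D0 n x y := fun n x y => Dd_nonneg ν (φ n) (hφ0 n) x y
  have hterm_nonneg : ∀ n x y, (0:ℝ) ≤ (1/2)^n * min (D0 n x y) 1 := by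
    intro n x y
    have := hD0_nonneg n x y
    positivity
  have hterm_le : ∀ n x y, (1/2:ℝ)^n * min (D0 n x y) 1 ≤ (1/2)^n := by
    intro n x y
    have h1 : min (D0 n x y) 1 ≤ 1 := min_le_right _ _
    nlinarith [pow_pos (by norm_num : (0:ℝ) < 1/2) n]
  have hsummable : ∀ x y, Summable fun n => (1/2:ℝ)^n * min (D0 n x y) 1 := by
    intro x y
    exact Summable.of_nonneg_of_le (fun n => hterm_nonneg n x y) (fun n => hterm_le n x y)
      summable_geometric_two
  set D : X → X → ℝ := fun x y => ∑' n, (1/2:ℝ)^n * min (D0 n x y) 1 with hD_def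
  refine ⟨D, ?_, ?_, ?_, ?_, ?_, ?_, ?_⟩
  · intro x
    rw [hD_def]
    simp only
    have h0 : ∀ n, (1/2:ℝ)^n * min (D0 n x x) 1 = 0 := by
      intro n
      rw [hD0_def]
      simp [Dd_self ν (φ n) (hφ0 n) x]
    exact (tsum_congr h0).trans tsum_zero
  · intro x y
    exact tsum_congr fun n => by rw [hD0_def]; simp [Dd_comm ν (φ n) x y]
  · intro x y z
    have h1 : ∀ n, (1/2:ℝ)^n * min (D0 n x z) 1 ≤
        (1/2)^n * min (D0 n x y) 1 + (1/2)^n * min (D0 n y z) 1 := by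
      intro n
      rw [← mul_add]
      refine mul_le_mul_of_nonneg_left ?_ (by positivity)
      exact min1_triangle (hD0_nonneg n x y) (hD0_nonneg n y z)
        (Dd_triangle ν (φ n) hproper (hφ0 n) (hφcont n) (hCc n) (hφsupp n) (hφlip n) x y z)
    calc D x z ≤ ∑' n, ((1/2:ℝ)^n * min (D0 n x y) 1 + (1/2)^n * min (D0 n y z) 1) :=
          Summable.tsum_le_tsum h1 (hsummable x z) ((hsummable x y).add (hsummable y z))
      _ = D x y + D y z := Summable.tsum_add (hsummable x y) (hsummable y z)
  · intro x y hxy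
    obtain ⟨n, hxn⟩ := exists_mem_compactCovering x
    have hxK : x ∈ K n := Or.inl hxn
    have hpos : 0 < Ff (φ n) x y := by
      refine lt_min (dist_pos.2 hxy) ?_
      have := hφ0 n y
      have := hφK n x hxK
      have := hε0 n
      linarith
    have hDn : 0 < D0 n x y :=
      Dd_pos ν (φ n) hproper (hφ0 n) (hφcont n) (hCc n) (hφsupp n) hpos
    have hterm : 0 < (1/2:ℝ)^n * min (D0 n x y) 1 := by
      have : (0:ℝ) < min (D0 n x y) 1 := lt_min hDn one_pos
      positivity
    exact lt_of_lt_of_le hterm (Summable.le_tsum (hsummable x y) n fun m _ => hterm_nonneg m x y)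
  · intro g x y
    exact tsum_congr fun n => by rw [hD0_def]; simp [Dd_invariant ν (φ n) g x y]
  · intro x
    refine continuous_tsum (f := fun n y => (1/2:ℝ)^n * min (D0 n x y) 1)
      (u := fun n => (1/2:ℝ)^n) ?_ summable_geometric_two ?_
    · intro n
      exact (continuous_const.mul ((Dd_continuous ν (φ n) hproper (hφ0 n) (hφcont n)
        (hCc n) (hφsupp n) (hφle n) x).min continuous_const))
    · intro n y
      rw [Real.norm_of_nonneg (hterm_nonneg n x y)]
      exact hterm_le n x y
  · -- the main estimate
    intro x V hV hxV
    obtain ⟨n, hxn⟩ := exists_mem_compactCovering x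
    have hxK : x ∈ K n := Or.inl hxn
    have hφx : φ n x = ε n := hφK n x hxK
    -- a small compact neighborhood of 1 in G
    have hWopen : IsOpen {g : G | dist (g • x) x < ε n / 4} :=
      isOpen_lt ((continuous_id.smul continuous_const).dist continuous_const)
        continuous_const
    have hW1 : (1:G) ∈ {g : G | dist (g • x) x < ε n / 4} := by
      simp only [mem_setOf_eq, one_smul, dist_self]
      linarith [hε0 n]
    obtain ⟨N, hNc, hN1, hNW⟩ := exists_compact_subset hWopen hW1
    set U : Set G := interior N with hU_def
    have hUcl_c : IsCompact (closure U) :=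
      hNc.of_isClosed_subset isClosed_closure (closure_minimal interior_subset hNc.isClosed)
    have hνU_pos : 0 < ν U := (isOpen_interior).measure_pos ν ⟨1, hN1⟩
    have hνU_ne_top : ν U ≠ ⊤ :=
      ne_top_of_le_ne_top hUcl_c.measure_lt_top.ne (measure_mono subset_closure)
    set L : Set X := (fun p : G × X => p.1⁻¹ • p.2) '' ((closure U) ×ˢ C n) with hL_def
    have hLc : IsCompact L :=
      (hUcl_c.prod (hCc n)).image ((continuous_fst.inv).smul continuous_snd)
    set b : ℝ := ε n / 2 * (ν U).toReal with hb_def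
    have hb : 0 < b := by
      refine mul_pos (by linarith [hε0 n]) ?_
      exact ENNReal.toReal_pos hνU_pos.ne' hνU_ne_top
    have hclaim : ∀ y, y ∉ L → b ≤ D0 n x y := by
      intro y hy
      refine Dd_lower ν (φ n) isOpen_interior.measurableSet hνU_ne_top hproper (hφ0 n)
        (hφcont n) (hCc n) (hφsupp n) ?_
      intro g hgU
      have hgW : dist (g • x) x < ε n / 4 := hNW (interior_subset hgU)
      have h1 : ε n - ε n / 4 ≤ φ n (g • x) := by
        have := hφlip n (g • x) x
        rw [hφx] at this
        have hd : dist (g • x) x ≤ ε n / 4 := hgW.le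
        linarith
      have h2 : φ n (g • y) = 0 := by
        by_contra h
        refine hy ⟨(g, g • y), ⟨subset_closure hgU, hφsupp n _ h⟩, ?_⟩
        simp
      have h3 : φ n (g • x) ≤ φ n (g • y) + dist (g • y) (g • x) := hφlip n (g • y) (g • x)
      have hεn := hε0 n
      refine le_min ?_ ?_
      · rw [dist_comm (g • x) (g • y)]
        rw [h2] at h3
        linarith
      · rw [h2]
        linarith
    set δ₁ : ℝ := (1/2:ℝ)^n * min b 1 with hδ₁_def
    have hδ₁pos : 0 < δ₁ := by
      have : (0:ℝ) < min b 1 := lt_min hb one_pos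
      positivity
    have hδ₁le : ∀ y, y ∉ L → δ₁ ≤ D x y := by
      intro y hy
      have h1 : min b 1 ≤ min (D0 n x y) 1 :=
        min_le_min (hclaim y hy) le_rfl
      refine le_trans ?_ (Summable.le_tsum (hsummable x y) n fun m _ => hterm_nonneg m x y)
      exact mul_le_mul_of_nonneg_left h1 (by positivity)
    set S : Set X := L ∩ Vᶜ with hS_def
    have hScompact : IsCompact S := hLc.inter_right hV.isClosed_compl
    have hDcont : Continuous (D x) := by
      refine continuous_tsum (f := fun n y => (1/2:ℝ)^n * min (D0 n x y) 1)
        (u := fun n => (1/2:ℝ)^n) ?_ summable_geometric_two ?_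
      · intro m
        exact (continuous_const.mul ((Dd_continuous ν (φ m) hproper (hφ0 m) (hφcont m)
          (hCc m) (hφsupp m) (hφle m) x).min continuous_const))
      · intro m y
        rw [Real.norm_of_nonneg (hterm_nonneg m x y)]
        exact hterm_le m x y
    have hDpos : ∀ y, x ≠ y → 0 < D x y := by
      intro y hxy
      obtain ⟨k, hxk⟩ := exists_mem_compactCovering x
      have hxKk : x ∈ K k := Or.inl hxk
      have hpos : 0 < Ff (φ k) x y := by
        refine lt_min (dist_pos.2 hxy) ?_
        have := hφ0 k y
        have := hφK k x hxKk
        have := hε0 k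
        linarith
      have hDn : 0 < D0 k x y :=
        Dd_pos ν (φ k) hproper (hφ0 k) (hφcont k) (hCc k) (hφsupp k) hpos
      have hterm : 0 < (1/2:ℝ)^k * min (D0 k x y) 1 := by
        have : (0:ℝ) < min (D0 k x y) 1 := lt_min hDn one_pos
        positivity
      exact lt_of_lt_of_le hterm (Summable.le_tsum (hsummable x y) k fun m _ => hterm_nonneg m x y)
    by_cases hS : S.Nonempty
    · obtain ⟨y₁, hy₁S, hmin⟩ := hScompact.exists_isMinOn hS hDcont.continuousOn
      have hy₁x : x ≠ y₁ := by
        rintro rfl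
        exact hy₁S.2 hxV
      set δ₂ : ℝ := D x y₁ with hδ₂_def
      have hδ₂pos : 0 < δ₂ := hDpos y₁ hy₁x
      refine ⟨min δ₁ δ₂, lt_min hδ₁pos hδ₂pos, ?_⟩
      intro y hy
      by_contra hyV
      by_cases hyL : y ∈ L
      · have : δ₂ ≤ D x y := hmin ⟨hyL, hyV⟩
        have := min_le_right δ₁ δ₂
        linarith
      · have := hδ₁le y hyL
        have := min_le_left δ₁ δ₂
        linarith
    · refine ⟨δ₁, hδ₁pos, ?_⟩
      intro y hy
      by_contra hyV
      by_cases hyL : y ∈ L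
      · exact hS ⟨y, hyL, hyV⟩
      · have := hδ₁le y hyL
        linarith

end FewSym
/-- Let `X` be a locally compact, σ-compact, metrizable topological
space with `few symmetries`: for every distance function on `X` inducing the topology of
`X`, the group of surjective isometries of `X` is finite. If `G` is a locally compact
Hausdorff topological group acting properly, continuously and faithfully on `X`, then `G`
is a finite group. -/
theorem finite_of_proper_action_on_few_symmetries
    {X : Type*} [TopologicalSpace X] [LocallyCompactSpace X] [SigmaCompactSpace X]
    [TopologicalSpace.MetrizableSpace X]
    (hfew : ∀ m : MetricSpace X, m.toUniformSpace.toTopologicalSpace = ‹TopologicalSpace X› →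
      Finite {f : X → X // Function.Surjective f ∧
        ∀ x y : X, m.dist (f x) (f y) = m.dist x y})
    {G : Type*} [Group G] [TopologicalSpace G] [IsTopologicalGroup G]
    [LocallyCompactSpace G] [T2Space G]
    [MulAction G X] [ContinuousSMul G X]
    (hproper : IsProperMap (fun p : G × X => (p.1 • p.2, p.2)))
    (hfaithful : ∀ g : G, (∀ x : X, g • x = x) → g = 1) :
    Finite G := by
  cases isEmpty_or_nonempty X with
  | inl h =>
    have hsub : Subsingleton G := ⟨fun a b => by
      rw [hfaithful a fun x => (h.false x).elim, hfaithful b fun x => (h.false x).elim]⟩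
    exact Finite.of_subsingleton
  | inr hne =>
    letI m₀ : MetricSpace X := TopologicalSpace.metrizableSpaceMetric X
    obtain ⟨D, hself, hcomm, htri, hpos, hinv, hcont, hopen⟩ :=
      @FewSym.exists_invariant_metric X m₀ ‹LocallyCompactSpace X› ‹SigmaCompactSpace X›
        hne G _ _ _ ‹LocallyCompactSpace G› ‹T2Space G› _ ‹ContinuousSMul G X› hproper
    have hopen_iff : ∀ s : Set X, IsOpen s ↔ ∀ x ∈ s, ∃ ε > 0, ∀ y, D x y < ε → y ∈ s := by
      intro s
      constructor
      · intro hs x hx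
        exact hopen x s hs hx
      · intro hs
        rw [isOpen_iff_mem_nhds]
        intro x hx
        obtain ⟨ε, hε, hεs⟩ := hs x hx
        have hc : ContinuousAt (fun y => D x y) x := (hcont x).continuousAt
        have hlt : D x x < ε := by rw [hself x]; exact hε
        exact Filter.mem_of_superset (hc.preimage_mem_nhds (Iio_mem_nhds hlt))
          fun y hy => hεs y hy
    let m : MetricSpace X := MetricSpace.ofDistTopology D hself hcomm htri hopen_iff
      (fun x y h0 => by
        by_contra hne'
        exact (hpos x y hne').ne' h0)
    haveI hfin := hfew m rfl
    have hinj : Function.Injective (fun g : G =>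
        (⟨fun x => g • x, (MulAction.bijective g).surjective, fun x y => hinv g x y⟩ :
          {f : X → X // Function.Surjective f ∧
            ∀ x y : X, m.dist (f x) (f y) = m.dist x y})) := by
      intro g g' hgg'
      have h1 : ∀ x : X, g • x = g' • x := fun x =>
        congrFun (congrArg Subtype.val hgg') x
      have h2 : g'⁻¹ * g = 1 := hfaithful _ fun x => by
        rw [mul_smul, h1 x, inv_smul_smul]
      exact (inv_mul_eq_one.mp h2).symm
    exact Finite.of_injective _ hinj
end

section
/- Let p : E → X be a covering map, where X is connected and locally path-connected and E is connected. Let φ : ℝ × X → X be a continuous action of the additive group ℝ on X. Then there exists a continuous action φ̃ : ℝ × E → E of ℝ on E such that p(φ̃(t, e)) = φ(t, p(e)) for all t ∈ ℝ and e ∈ E. -/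
open Set Topology

/-- One-step extension of a local lift of the flow along an evenly covered set. -/
private theorem liftData_extend {E X : Type*} [TopologicalSpace E] [TopologicalSpace X]
    (p : E → X) (hp : IsCoveringMap p)
    (φ : ℝ × X → X) (hφcont : Continuous φ)
    (e : E) {b b' : ℝ} (hb : 0 ≤ b) (hbb' : b ≤ b') (x₀ : X) [Nonempty (p ⁻¹' {x₀})]
    (hU : ∀ s ∈ Set.Icc b b', φ (s, p e) ∈ (hp x₀).toTrivialization.baseSet)
    (hQ : ∃ W : Set E, IsOpen W ∧ e ∈ W ∧ ∃ L : ℝ × E → E,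
      ContinuousOn L (Set.Icc 0 b ×ˢ W) ∧
      (∀ e' ∈ W, L (0, e') = e') ∧
      (∀ s ∈ Set.Icc 0 b, ∀ e' ∈ W, p (L (s, e')) = φ (s, p e'))) :
    ∃ W : Set E, IsOpen W ∧ e ∈ W ∧ ∃ L : ℝ × E → E,
      ContinuousOn L (Set.Icc 0 b' ×ˢ W) ∧
      (∀ e' ∈ W, L (0, e') = e') ∧
      (∀ s ∈ Set.Icc 0 b', ∀ e' ∈ W, p (L (s, e')) = φ (s, p e')) := by
  classical
  obtain ⟨W, hWo, heW, L, hLc, hL0, hLp⟩ := hQ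
  haveI : DiscreteTopology (p ⁻¹' {x₀}) := (hp x₀).1
  set t := (hp x₀).toTrivialization with ht
  -- continuity of `e' ↦ L (b, e')` on `W`
  have hLbc : ContinuousOn (fun e' => L (b, e')) W := by
    refine hLc.comp (Continuous.continuousOn (by continuity)) ?_
    intro e' he'
    exact Set.mk_mem_prod ⟨hb, le_rfl⟩ he'
  have hpLb : ∀ e' ∈ W, p (L (b, e')) = φ (b, p e') :=
    fun e' he' => hLp b ⟨hb, le_rfl⟩ e' he'
  have hLbe_src : L (b, e) ∈ t.source := by
    rw [t.mem_source, hpLb e heW]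
    exact hU b ⟨le_rfl, hbb'⟩
  set i := (t (L (b, e))).2 with hi
  set V : Set E := t.source ∩ (Prod.snd ∘ t) ⁻¹' {i} with hV
  have hVopen : IsOpen V :=
    t.continuousOn_toFun.isOpen_inter_preimage t.open_source
      (continuous_snd.isOpen_preimage _ (isOpen_discrete _))
  -- tube lemma
  have hop : IsOpen (φ ⁻¹' t.baseSet) := t.open_baseSet.preimage hφcont
  have hsub : Set.Icc b b' ×ˢ ({p e} : Set X) ⊆ φ ⁻¹' t.baseSet := by
    rintro ⟨s, x⟩ ⟨hs, hx⟩
    rw [mem_singleton_iff] at hx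
    subst hx
    exact hU s hs
  obtain ⟨N1, N2, hN1o, hN2o, hN1, hN2, hN12⟩ :=
    generalized_tube_lemma isCompact_Icc isCompact_singleton hop hsub
  set W'' : Set E := (W ∩ (fun e' => L (b, e')) ⁻¹' V) ∩ p ⁻¹' N2 with hW''
  have hW''o : IsOpen W'' :=
    (hLbc.isOpen_inter_preimage hWo hVopen).inter (hN2o.preimage hp.continuous)
  have heW'' : e ∈ W'' :=
    ⟨⟨heW, ⟨hLbe_src, rfl⟩⟩, hN2 rfl⟩
  have hkey : ∀ s ∈ Set.Icc b b', ∀ e' ∈ W'', (φ (s, p e'), i) ∈ t.target := by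
    intro s hs e' he'
    rw [t.mem_target]
    exact hN12 ⟨hN1 hs, he'.2⟩
  have hmatch : ∀ e' ∈ W'', t.toPartialEquiv.symm (φ (b, p e'), i) = L (b, e') := by
    intro e' he'
    have h1 : L (b, e') ∈ t.source := he'.1.2.1
    have h2 : (t (L (b, e'))).2 = i := he'.1.2.2
    have h3 : (t (L (b, e'))).1 = φ (b, p e') := by
      rw [t.coe_fst h1, hpLb e' he'.1.1]
    have h4 : (φ (b, p e'), i) = t (L (b, e')) := by
      rw [← h2, ← h3]
    rw [h4]
    exact t.toPartialHomeomorph.left_inv h1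
  refine ⟨W'', hW''o, heW'',
    fun z => if z.1 ≤ b then L z else t.toPartialEquiv.symm (φ (z.1, p z.2), i), ?_, ?_, ?_⟩
  · refine ContinuousOn.if ?_ ?_ ?_
    · rintro a ⟨ha, hfr⟩
      have hab : a.1 = b := frontier_le_subset_eq continuous_fst continuous_const hfr
      have ha2 : a.2 ∈ W'' := ha.2
      have : a = (b, a.2) := Prod.ext hab rfl
      rw [this]
      exact (hmatch a.2 ha2).symm
    · have hcl : closure {z : ℝ × E | z.1 ≤ b} = {z : ℝ × E | z.1 ≤ b} :=
        (isClosed_le continuous_fst continuous_const).closure_eq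
      refine hLc.mono ?_
      rintro ⟨s, e'⟩ ⟨⟨hs, he'⟩, hz2⟩
      rw [hcl] at hz2
      exact ⟨⟨hs.1, hz2⟩, he'.1.1⟩
    · have hcl2 : closure {z : ℝ × E | ¬ z.1 ≤ b} ⊆ {z : ℝ × E | b ≤ z.1} :=
        closure_minimal (fun z hz => (not_le.1 hz).le)
          (isClosed_le continuous_const continuous_fst)
      refine t.toPartialHomeomorph.continuousOn_symm.comp
        (Continuous.continuousOn ?_) ?_
      · exact (hφcont.comp (continuous_fst.prodMk (hp.continuous.comp
          continuous_snd))).prodMk continuous_const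
      · rintro ⟨s, e'⟩ ⟨⟨hs, he'⟩, hclo⟩
        exact hkey s ⟨hcl2 hclo, hs.2⟩ e' he'
  · intro e' he'
    simp only [if_pos hb]
    exact hL0 e' he'.1.1
  · intro s hs e' he'
    by_cases h : s ≤ b
    · simp only [if_pos h]
      exact hLp s ⟨hs.1, h⟩ e' he'.1.1
    · simp only [if_neg h]
      exact t.proj_symm_apply (hkey s ⟨(not_le.1 h).le, hs.2⟩ e' he')

private theorem exists_half_lift {E X : Type*} [TopologicalSpace E] [TopologicalSpace X]
    (p : E → X) (hp : IsCoveringMap p)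
    (φ : ℝ × X → X) (hφcont : Continuous φ) (hφzero : ∀ x : X, φ (0, x) = x) :
    ∃ ψ : ℝ × E → E,
      ContinuousOn ψ (Set.Ici 0 ×ˢ (Set.univ : Set E)) ∧
      (∀ e, ψ (0, e) = e) ∧
      (∀ t, 0 ≤ t → ∀ e, p (ψ (t, e)) = φ (t, p e)) := by
  classical
  have base : ∀ e : E, ∃ W : Set E, IsOpen W ∧ e ∈ W ∧ ∃ L : ℝ × E → E,
      ContinuousOn L (Set.Icc 0 0 ×ˢ W) ∧
      (∀ e' ∈ W, L (0, e') = e') ∧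
      (∀ s ∈ Set.Icc (0:ℝ) 0, ∀ e' ∈ W, p (L (s, e')) = φ (s, p e')) := by
    intro e
    refine ⟨univ, isOpen_univ, mem_univ e, Prod.snd, continuous_snd.continuousOn,
      fun e' _ => rfl, ?_⟩
    intro s hs e' _
    obtain rfl : s = 0 := le_antisymm hs.2 hs.1
    exact (hφzero (p e')).symm
  have key : ∀ (e : E) (b : ℝ), 0 ≤ b → ∃ W : Set E, IsOpen W ∧ e ∈ W ∧ ∃ L : ℝ × E → E,
      ContinuousOn L (Set.Icc 0 b ×ˢ W) ∧
      (∀ e' ∈ W, L (0, e') = e') ∧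
      (∀ s ∈ Set.Icc 0 b, ∀ e' ∈ W, p (L (s, e')) = φ (s, p e')) := by
    intro e B hB
    set S : Set ℝ := {b | b ∈ Set.Icc 0 B ∧ ∃ W : Set E, IsOpen W ∧ e ∈ W ∧ ∃ L : ℝ × E → E,
      ContinuousOn L (Set.Icc 0 b ×ˢ W) ∧
      (∀ e' ∈ W, L (0, e') = e') ∧
      (∀ s ∈ Set.Icc 0 b, ∀ e' ∈ W, p (L (s, e')) = φ (s, p e'))} with hS
    have hS0 : (0:ℝ) ∈ S := ⟨⟨le_rfl, hB⟩, base e⟩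
    have hSbdd : BddAbove S := ⟨B, fun b hb => hb.1.2⟩
    set c := sSup S with hc
    have hc0 : 0 ≤ c := le_csSup hSbdd hS0
    have hcB : c ≤ B := csSup_le ⟨0, hS0⟩ (fun b hb => hb.1.2)
    -- continuity at `c` of the orbit of `p e`
    have hcA : ContinuousAt (fun s : ℝ => φ (s, p e)) c :=
      (hφcont.comp (continuous_id.prodMk continuous_const)).continuousAt
    have hne : Nonempty (p ⁻¹' {φ (c, p e)}) := by
      obtain ⟨U, hxU, hUo, -, H, -⟩ := (hp (φ (c, p e))).2
      obtain ⟨δ, hδ, hδb⟩ := Metric.mem_nhds_iff.1 (hcA.preimage_mem_nhds (hUo.mem_nhds hxU))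
      obtain ⟨b, hbS, hbc⟩ : ∃ b ∈ S, c - δ < b := exists_lt_of_lt_csSup ⟨0, hS0⟩ (by linarith)
      have hbc' : b ≤ c := le_csSup hSbdd hbS
      obtain ⟨W, -, heW, L, -, -, hLp⟩ := hbS.2
      have hmem : p (L (b, e)) ∈ U := by
        rw [hLp b ⟨hbS.1.1, le_rfl⟩ e heW]
        apply hδb
        rw [Metric.mem_ball, Real.dist_eq, abs_lt]; constructor <;> linarith
      exact ⟨(H ⟨L (b, e), hmem⟩).2⟩
    have hmemU : φ (c, p e) ∈ (hp (φ (c, p e))).toTrivialization.baseSet :=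
      (hp (φ (c, p e))).mem_toTrivialization_baseSet
    have hnhds : (fun s : ℝ => φ (s, p e)) ⁻¹' (hp (φ (c, p e))).toTrivialization.baseSet
        ∈ 𝓝 c :=
      hcA.preimage_mem_nhds
        ((hp (φ (c, p e))).toTrivialization.open_baseSet.mem_nhds hmemU)
    obtain ⟨ε, hε, hball⟩ := Metric.mem_nhds_iff.1 hnhds
    have hballU : ∀ s : ℝ, |s - c| ≤ ε / 2 →
        φ (s, p e) ∈ (hp (φ (c, p e))).toTrivialization.baseSet := by
      intro s hsd
      apply hball
      rw [Metric.mem_ball, Real.dist_eq]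
      linarith
    obtain ⟨b, hbS, hbc⟩ : ∃ b ∈ S, c - ε / 2 < b :=
      exists_lt_of_lt_csSup ⟨0, hS0⟩ (by linarith)
    have hbc' : b ≤ c := le_csSup hSbdd hbS
    set b' := min (c + ε / 2) B with hb'
    have hbb' : b ≤ b' := le_min (by linarith) hbS.1.2
    have hstep := liftData_extend p hp φ hφcont e hbS.1.1 hbb' (φ (c, p e))
      (fun s hs => hballU s (abs_le.2 ⟨by linarith [hs.1],
        by linarith [hs.2, min_le_left (c + ε / 2) B]⟩)) hbS.2
    have hb'S : b' ∈ S := ⟨⟨le_trans hbS.1.1 hbb', min_le_right _ _⟩, hstep⟩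
    have hb'c : b' ≤ c := le_csSup hSbdd hb'S
    have hBc : B ≤ c := by
      by_contra hcon
      push_neg at hcon
      rcases le_or_gt (c + ε / 2) B with hle | hlt
      · have : b' = c + ε / 2 := min_eq_left hle
        rw [this] at hb'c; linarith
      · have : b' = B := min_eq_right hlt.le
        rw [this] at hb'c; linarith
    have hb'B : b' = B := min_eq_right (by linarith)
    rw [hb'B] at hstep
    exact hstep
  choose W hWo hWe L hLc hL0 hLp using key
  set ψ : ℝ × E → E := fun z =>
    if h : 0 ≤ z.1 then L z.2 (z.1 + 1) (by linarith) (z.1, z.2) else z.2 with hψ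
  have coh : ∀ (e₀ : E) (b : ℝ) (hb : 0 ≤ b), ∀ e' ∈ W e₀ b hb, ∀ s ∈ Set.Icc 0 b,
      ψ (s, e') = L e₀ b hb (s, e') := by
    intro e₀ b hb e' he' s hs
    have hs0 : 0 ≤ s := hs.1
    have hs1 : (0:ℝ) ≤ s + 1 := by linarith
    have hred : ψ (s, e') = L e' (s + 1) hs1 (s, e') := by
      simp only [hψ]
      rw [dif_pos hs0]
    rw [hred]
    have hsub1 : Set.MapsTo (fun u : ℝ => (u, e')) (Set.Icc 0 s)
        (Set.Icc 0 (s + 1) ×ˢ W e' (s + 1) hs1) := by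
      intro u hu
      exact ⟨⟨hu.1, by linarith [hu.2]⟩, hWe e' (s + 1) hs1⟩
    have hsub2 : Set.MapsTo (fun u : ℝ => (u, e')) (Set.Icc 0 s)
        (Set.Icc 0 b ×ˢ W e₀ b hb) := by
      intro u hu
      exact ⟨⟨hu.1, le_trans hu.2 hs.2⟩, he'⟩
    have h₁ : ContinuousOn (fun u : ℝ => L e' (s + 1) hs1 (u, e')) (Set.Icc 0 s) :=
      (hLc e' (s + 1) hs1).comp (Continuous.continuousOn (by continuity)) hsub1
    have h₂ : ContinuousOn (fun u : ℝ => L e₀ b hb (u, e')) (Set.Icc 0 s) :=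
      (hLc e₀ b hb).comp (Continuous.continuousOn (by continuity)) hsub2
    have heq : Set.EqOn (p ∘ fun u : ℝ => L e' (s + 1) hs1 (u, e'))
        (p ∘ fun u : ℝ => L e₀ b hb (u, e')) (Set.Icc 0 s) := by
      intro u hu
      show p (L e' (s + 1) hs1 (u, e')) = p (L e₀ b hb (u, e'))
      rw [hLp e' (s + 1) hs1 u ⟨hu.1, by linarith [hu.2]⟩ e' (hWe e' (s + 1) hs1),
        hLp e₀ b hb u ⟨hu.1, le_trans hu.2 hs.2⟩ e' he']
    have h0 : L e' (s + 1) hs1 (0, e') = L e₀ b hb (0, e') := by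
      rw [hL0 e' (s + 1) hs1 e' (hWe e' (s + 1) hs1), hL0 e₀ b hb e' he']
    exact hp.eqOn_of_comp_eqOn isPreconnected_Icc h₁ h₂ heq
      (Set.left_mem_Icc.2 hs0) h0 ⟨hs0, le_rfl⟩
  have hcont : ContinuousOn ψ (Set.Ici 0 ×ˢ (Set.univ : Set E)) := by
    rintro ⟨t, e⟩ ⟨ht, -⟩
    have hb : (0:ℝ) ≤ t + 1 := by
      simp only [Set.mem_Ici] at ht; linarith
    have ht' : (0:ℝ) ≤ t := ht
    have hD : ContinuousOn ψ (Set.Icc 0 (t + 1) ×ˢ W e (t + 1) hb) :=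
      (hLc e (t + 1) hb).congr (fun z hz => coh e (t + 1) hb z.2 hz.2 z.1 hz.1)
    have hmem : Set.Icc 0 (t + 1) ×ˢ W e (t + 1) hb ∈
        𝓝[Set.Ici 0 ×ˢ (Set.univ : Set E)] (t, e) := by
      rw [mem_nhdsWithin]
      refine ⟨Set.Iio (t + 1) ×ˢ W e (t + 1) hb,
        isOpen_Iio.prod (hWo e (t + 1) hb),
        ⟨lt_add_one t, hWe e (t + 1) hb⟩, ?_⟩
      rintro ⟨s, e'⟩ ⟨⟨hs1, he'⟩, hs0, -⟩
      exact ⟨⟨hs0, hs1.le⟩, he'⟩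
    exact (hD (t, e) ⟨⟨ht', by linarith⟩, hWe e (t + 1) hb⟩).mono_of_mem_nhdsWithin hmem
  refine ⟨ψ, hcont, ?_, ?_⟩
  · intro e
    have : ψ (0, e) = L e (0 + 1) (by norm_num) (0, e) := by
      simp only [hψ]; rw [dif_pos le_rfl]
    rw [this]
    exact hL0 e (0 + 1) (by norm_num) e (hWe e (0 + 1) (by norm_num))
  · intro t ht e
    have hb : (0:ℝ) ≤ t + 1 := by linarith
    have : ψ (t, e) = L e (t + 1) hb (t, e) := by
      simp only [hψ]; rw [dif_pos ht]
    rw [this]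
    exact hLp e (t + 1) hb t ⟨ht, by linarith⟩ e (hWe e (t + 1) hb)

/-- Let `p : E → X` be a covering map, where `X` is connected and
locally path-connected and `E` is connected. Let `φ : ℝ × X → X` be a continuous action
of the additive group `ℝ` on `X`. Then there exists a continuous action `ψ : ℝ × E → E`
of `ℝ` on `E` such that `p (ψ (t, e)) = φ (t, p e)` for all `t : ℝ` and `e : E`. -/
theorem exists_lift_real_action_of_coveringMap
    {E X : Type*} [TopologicalSpace E] [TopologicalSpace X]
    [ConnectedSpace X] [LocallyPathConnectedSpace X] [ConnectedSpace E]
    (p : E → X) (hp : IsCoveringMap p)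
    (φ : ℝ × X → X) (hφcont : Continuous φ)
    (hφzero : ∀ x : X, φ (0, x) = x)
    (hφadd : ∀ (s t : ℝ) (x : X), φ (s, φ (t, x)) = φ (s + t, x)) :
    ∃ ψ : ℝ × E → E, Continuous ψ ∧
      (∀ e : E, ψ (0, e) = e) ∧
      (∀ (s t : ℝ) (e : E), ψ (s, ψ (t, e)) = ψ (s + t, e)) ∧
      (∀ (t : ℝ) (e : E), p (ψ (t, e)) = φ (t, p e)) := by
  classical
  obtain ⟨ψp, hψpc, hψp0, hψpp⟩ := exists_half_lift p hp φ hφcont hφzero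
  set φm : ℝ × X → X := fun z => φ (-z.1, z.2) with hφm
  have hφmc : Continuous φm :=
    hφcont.comp (continuous_fst.neg.prodMk continuous_snd)
  have hφm0 : ∀ x : X, φm (0, x) = x := by
    intro x; simp only [hφm, neg_zero]; exact hφzero x
  obtain ⟨ψm, hψmc, hψm0, hψmp⟩ := exists_half_lift p hp φm hφmc hφm0
  set Ψ : ℝ × E → E := fun z => if (0:ℝ) ≤ z.1 then ψp z else ψm (-z.1, z.2) with hΨ
  have hΨc : Continuous Ψ := by
    refine continuous_if_le continuous_const continuous_fst ?_ ?_ ?_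
    · refine hψpc.mono ?_
      intro z hz
      exact ⟨hz, Set.mem_univ _⟩
    · refine hψmc.comp (Continuous.continuousOn (by continuity)) ?_
      intro z hz
      exact ⟨Set.mem_Ici.2 (neg_nonneg.2 hz), Set.mem_univ _⟩
    · rintro ⟨a, e⟩ ha
      have : a = 0 := ha.symm
      subst this
      rw [hψp0, neg_zero, hψm0]
  have hΨ0 : ∀ e : E, Ψ (0, e) = e := by
    intro e
    simp only [hΨ]
    rw [if_pos le_rfl]
    exact hψp0 e
  have hΨp : ∀ (t : ℝ) (e : E), p (Ψ (t, e)) = φ (t, p e) := by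
    intro t e
    by_cases h : (0:ℝ) ≤ t
    · simp only [hΨ]
      rw [if_pos h]
      exact hψpp t h e
    · simp only [hΨ]
      rw [if_neg h]
      have := hψmp (-t) (by linarith [not_le.1 h]) e
      rw [this]; show φ (- -t, p e) = φ (t, p e); rw [neg_neg]
  have hadd : ∀ (s t : ℝ) (e : E), Ψ (s, Ψ (t, e)) = Ψ (s + t, e) := by
    intro s t e
    have cont1 : Continuous fun z : ℝ × E => Ψ (z.1, Ψ (t, z.2)) :=
      hΨc.comp (continuous_fst.prodMk (hΨc.comp
        (continuous_const.prodMk continuous_snd)))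
    have cont2 : Continuous fun z : ℝ × E => Ψ (z.1 + t, z.2) :=
      hΨc.comp ((continuous_fst.add continuous_const).prodMk continuous_snd)
    have hcomp : (p ∘ fun z : ℝ × E => Ψ (z.1, Ψ (t, z.2)))
        = p ∘ fun z : ℝ × E => Ψ (z.1 + t, z.2) := by
      funext z
      show p (Ψ (z.1, Ψ (t, z.2))) = p (Ψ (z.1 + t, z.2))
      rw [hΨp, hΨp, hΨp, hφadd]
    have hpt : (fun z : ℝ × E => Ψ (z.1, Ψ (t, z.2))) (0, e)
        = (fun z : ℝ × E => Ψ (z.1 + t, z.2)) (0, e) := by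
      show Ψ (0, Ψ (t, e)) = Ψ (0 + t, e)
      rw [hΨ0, zero_add]
    have := hp.eq_of_comp_eq cont1 cont2 hcomp (0, e) hpt
    exact congrFun this (s, e)
  exact ⟨Ψ, hΨc, hΨ0, hadd, hΨp⟩
end
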